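/- Let m1 ≥ m2 be positive integers with m1 + m2 even, set μ := (m1−m2)/2, and let λ_i := μ + τ_i − τ_{i−1} for i ≥ 1, where (τ_i) is the Thue–Morse sequence. For n ≥ 1 define the words a_n := μ λ_1⋯λ_{2^n−1} and b_n := (μ−1) λ_1⋯λ_{2^n−1} over the alphabet {μ−1, μ, μ+1}, with reflection w̄ replacing each letter c by 2μ − c, and set w_1 := b_n ā_n b̄_n a_n and w_2 := ā_n a_n. Then: (i) d_2^*(w_1) < d_2^*(w_2), where d_2^*(w) is the fraction of letters of w equal to μ; and (ii) for every real number d ∈ [d_2^*(w_1), d_2^*(w_2)] there exists an infinite sequence (t_i) obtained by concatenating blocks from {w_1, w_2} such that for each j ∈ {μ−1, μ, μ+1} the density lim_{n→∞} #{1 ≤ i ≤ n : t_i = j}/n exists, and the density of the letter μ in (t_i) equals d. -/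

import Mathlib

/-- `d₂*(w)`: the fraction of letters of the word `w` equal to `μ`. -/
noncomputable def d2star (μ : ℤ) (w : List ℤ) : ℝ := (w.count μ : ℝ) / w.length

/-- Reflection of a word over `{μ-1, μ, μ+1}`: each letter `c` is replaced by `2μ - c`. -/
def reflectZ (μ : ℤ) (w : List ℤ) : List ℤ := w.map (fun c => 2 * μ - c)

/-- The word `a_n = μ λ_1 ⋯ λ_{2^n - 1}`. -/
def wordA (μ : ℤ) (lam : ℕ → ℤ) (n : ℕ) : List ℤ :=
  μ :: (List.range (2 ^ n - 1)).map (fun i => lam (i + 1))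

/-- The word `b_n = (μ-1) λ_1 ⋯ λ_{2^n - 1}`. -/
def wordB (μ : ℤ) (lam : ℕ → ℤ) (n : ℕ) : List ℤ :=
  (μ - 1) :: (List.range (2 ^ n - 1)).map (fun i => lam (i + 1))

/-- `w_1 = b_n ā_n b̄_n a_n`. -/
def wordW1 (μ : ℤ) (lam : ℕ → ℤ) (n : ℕ) : List ℤ :=
  wordB μ lam n ++ reflectZ μ (wordA μ lam n) ++ reflectZ μ (wordB μ lam n) ++ wordA μ lam n

/-- `w_2 = ā_n a_n`. -/
def wordW2 (μ : ℤ) (lam : ℕ → ℤ) (n : ℕ) : List ℤ :=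
  reflectZ μ (wordA μ lam n) ++ wordA μ lam n

/-- `concatOf b i` is the `i`-th letter (i = 0,1,2,…) of the infinite concatenation of the
(nonempty) blocks `b 0, b 1, …`. -/
def concatOf (b : ℕ → List ℤ) (i : ℕ) : ℤ :=
  (((List.range (i + 1)).map b).flatten).getD i 0

/- ---------------- Auxiliary lemmas ---------------- -/

private lemma aux_count_reflect (μ x : ℤ) (w : List ℤ) :
    (reflectZ μ w).count x = w.count (2 * μ - x) := by
  have hinj : Function.Injective (fun c : ℤ => 2 * μ - c) := by
    intro a b h; dsimp at h; omega
  have h := List.count_map_of_injective w (fun c : ℤ => 2 * μ - c) hinj (2 * μ - x)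
  simpa [reflectZ, show 2 * μ - (2 * μ - x) = x from by ring] using h

private lemma aux_count3 (μ : ℤ) (l : List ℤ)
    (h : ∀ x ∈ l, x = μ - 1 ∨ x = μ ∨ x = μ + 1) :
    l.count (μ - 1) + l.count μ + l.count (μ + 1) = l.length := by
  induction l with
  | nil => simp
  | cons a t ih =>
    have ha := h a (List.mem_cons_self)
    have ht := ih (fun x hx => h x (List.mem_cons_of_mem _ hx))
    simp only [List.count_cons, List.length_cons, beq_iff_eq]
    rcases ha with h1 | h1 | h1 <;> subst h1 <;> split_ifs <;> omega

private lemma aux_take_prefix {l l' : List ℤ} (h : l <+: l') {N : ℕ} (hN : N ≤ l.length) :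
    l'.take N = l.take N := by
  obtain ⟨t, rfl⟩ := h
  exact List.take_append_of_le_length hN

private lemma aux_tendsto (f : ℕ → ℝ) (c C : ℝ) (h : ∀ N : ℕ, 1 ≤ N → |f N - c * N| ≤ C) :
    Filter.Tendsto (fun N : ℕ => f N / N) Filter.atTop (nhds c) := by
  have h0 : Filter.Tendsto (fun N : ℕ => f N / N - c) Filter.atTop (nhds 0) := by
    apply squeeze_zero_norm' (a := fun N : ℕ => C / N)
    · filter_upwards [Filter.eventually_ge_atTop 1] with N hN
      have hN' : (0:ℝ) < N := by exact_mod_cast hN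
      rw [Real.norm_eq_abs]
      have he : f N / N - c = (f N - c * N) / N := by
        rw [eq_div_iff (ne_of_gt hN'), sub_mul, div_mul_cancel₀ _ (ne_of_gt hN')]
      rw [he, abs_div, abs_of_pos hN']
      gcongr
      exact h N hN
    · exact tendsto_const_div_atTop_nhds_zero_nat C
  have h1 := h0.add_const c
  simpa using h1

private def Fcat (b : ℕ → List ℤ) (m : ℕ) : List ℤ := ((List.range m).map b).flatten

private lemma Fcat_succ (b : ℕ → List ℤ) (m : ℕ) : Fcat b (m + 1) = Fcat b m ++ b m := by
  simp [Fcat, List.range_succ]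

private lemma Fcat_prefix (b : ℕ → List ℤ) {m m' : ℕ} (h : m ≤ m') :
    Fcat b m <+: Fcat b m' := by
  induction m' with
  | zero => simp_all
  | succ m' ih =>
    rcases Nat.lt_or_ge m (m' + 1) with h' | h'
    · exact (ih (by omega)).trans (by rw [Fcat_succ]; exact List.prefix_append _ _)
    · have : m = m' + 1 := by omega
      subst this; exact List.prefix_rfl

private lemma Fcat_length_ge (b : ℕ → List ℤ) (hb : ∀ k, 1 ≤ (b k).length) (m : ℕ) :
    m ≤ (Fcat b m).length := by
  induction m with
  | zero => simp
  | succ m ih =>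
    rw [Fcat_succ]
    simp only [List.length_append]
    have := hb m
    omega

private lemma take_Fcat' (b : ℕ → List ℤ) {N m m' : ℕ} (h : m ≤ m')
    (hN : N ≤ (Fcat b m).length) : (Fcat b m').take N = (Fcat b m).take N :=
  aux_take_prefix (Fcat_prefix b h) hN

private lemma concatOf_eq_getD (b : ℕ → List ℤ) (i : ℕ) :
    concatOf b i = (Fcat b (i + 1)).getD i 0 := rfl

private lemma card_filter_eq_count (b : ℕ → List ℤ) (hb : ∀ k, 1 ≤ (b k).length)
    (j : ℤ) (N : ℕ) :
    ((Finset.range N).filter (fun i => concatOf b i = j)).card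
      = ((Fcat b N).take N).count j := by
  induction N with
  | zero => simp
  | succ N ih =>
    have hlen : N < (Fcat b (N + 1)).length := by
      have := Fcat_length_ge b hb (N + 1); omega
    have hget : (Fcat b (N + 1))[N]? = some (concatOf b N) := by
      rw [concatOf_eq_getD, List.getD_eq_getElem _ _ hlen, List.getElem?_eq_getElem hlen]
    have htake : (Fcat b (N + 1)).take (N + 1) = (Fcat b N).take N ++ [concatOf b N] := by
      rw [List.take_succ, hget,
        take_Fcat' b (Nat.le_succ N) (Fcat_length_ge b hb N)]
      rfl
    rw [htake, Finset.range_add_one, Finset.filter_insert]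
    by_cases hc : concatOf b N = j
    · rw [if_pos hc, Finset.card_insert_of_notMem (by simp), ih]
      simp [hc]
    · rw [if_neg hc, ih]
      simp [List.count_singleton, hc]

open Classical in
/-- One step of the greedy block choice. -/
noncomputable def gstep (l1 l2 c1 c2 : ℕ) (d : ℝ) (p : ℕ × ℕ) : ℕ × ℕ :=
  if (p.2 : ℝ) ≤ d * p.1 then (p.1 + l2, p.2 + c2) else (p.1 + l1, p.2 + c1)

/-- Greedy state: accumulated (length, count of `μ`). -/
noncomputable def gP (l1 l2 c1 c2 : ℕ) (d : ℝ) (k : ℕ) : ℕ × ℕ :=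
  (gstep l1 l2 c1 c2 d)^[k] (0, 0)

open Classical in
/-- The greedy block sequence. -/
noncomputable def gb (W1 W2 : List ℤ) (l1 l2 c1 c2 : ℕ) (d : ℝ) (k : ℕ) : List ℤ :=
  if ((gP l1 l2 c1 c2 d k).2 : ℝ) ≤ d * ((gP l1 l2 c1 c2 d k).1 : ℝ) then W2 else W1

private lemma gP_succ (l1 l2 c1 c2 : ℕ) (d : ℝ) (k : ℕ) :
    gP l1 l2 c1 c2 d (k + 1) = gstep l1 l2 c1 c2 d (gP l1 l2 c1 c2 d k) :=
  Function.iterate_succ_apply' _ _ _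

private lemma gb_cases (W1 W2 : List ℤ) (l1 l2 c1 c2 : ℕ) (d : ℝ) (k : ℕ) :
    (gb W1 W2 l1 l2 c1 c2 d k = W2 ∧
      ((gP l1 l2 c1 c2 d k).2 : ℝ) ≤ d * ((gP l1 l2 c1 c2 d k).1 : ℝ) ∧
      gP l1 l2 c1 c2 d (k + 1)
        = ((gP l1 l2 c1 c2 d k).1 + l2, (gP l1 l2 c1 c2 d k).2 + c2)) ∨
    (gb W1 W2 l1 l2 c1 c2 d k = W1 ∧
      d * ((gP l1 l2 c1 c2 d k).1 : ℝ) < ((gP l1 l2 c1 c2 d k).2 : ℝ) ∧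
      gP l1 l2 c1 c2 d (k + 1)
        = ((gP l1 l2 c1 c2 d k).1 + l1, (gP l1 l2 c1 c2 d k).2 + c1)) := by
  rw [gP_succ]
  unfold gb gstep
  split_ifs with h
  · exact Or.inl ⟨rfl, h, rfl⟩
  · exact Or.inr ⟨rfl, not_le.mp h, rfl⟩

set_option maxHeartbeats 1000000 in
theorem stmt19 (m1 m2 : ℕ) (hm2 : 1 ≤ m2) (hm : m2 ≤ m1) (heven : (m1 + m2) % 2 = 0)
    (μ : ℤ) (hμ : 2 * μ = (m1 : ℤ) - (m2 : ℤ))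
    (τ : ℕ → ℕ) (hτ0 : τ 0 = 0)
    (hτe : ∀ i, τ (2 * i) = τ i) (hτo : ∀ i, τ (2 * i + 1) = 1 - τ i)
    (lam : ℕ → ℤ) (hlam : ∀ i, 1 ≤ i → lam i = μ + (τ i : ℤ) - (τ (i - 1) : ℤ))
    (n : ℕ) (hn : 1 ≤ n) :
    d2star μ (wordW1 μ lam n) < d2star μ (wordW2 μ lam n) ∧
    ∀ d : ℝ, d ∈ Set.Icc (d2star μ (wordW1 μ lam n)) (d2star μ (wordW2 μ lam n)) →
      ∃ b : ℕ → List ℤ, (∀ k, b k = wordW1 μ lam n ∨ b k = wordW2 μ lam n) ∧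
        (∀ j : ℤ, j ∈ ({μ - 1, μ, μ + 1} : Set ℤ) →
          ∃ dj : ℝ, Filter.Tendsto
            (fun N : ℕ =>
              (((Finset.range N).filter (fun i => concatOf b i = j)).card : ℝ) / N)
            Filter.atTop (nhds dj)) ∧
        Filter.Tendsto
          (fun N : ℕ =>
            (((Finset.range N).filter (fun i => concatOf b i = μ)).card : ℝ) / N)
          Filter.atTop (nhds d) := by
  classical
  -- τ takes values in {0,1}
  have htau : ∀ i, τ i ≤ 1 := by
    intro i
    induction i using Nat.strong_induction_on with
    | _ i ih =>
      rcases Nat.even_or_odd i with ⟨j, hj⟩ | ⟨j, hj⟩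
      · rcases Nat.eq_zero_or_pos j with rfl | hj0
        · subst hj; simpa [hτ0] using Nat.zero_le 1
        · have : i = 2 * j := by omega
          rw [this, hτe]
          exact ih j (by omega)
      · rw [hj, hτo]
        exact Nat.sub_le _ _
  have hpow : 1 ≤ 2 ^ n := Nat.one_le_two_pow
  -- all letters are in {μ-1, μ, μ+1}
  have hmemA : ∀ x ∈ wordA μ lam n, x = μ - 1 ∨ x = μ ∨ x = μ + 1 := by
    intro x hx
    rw [wordA, List.mem_cons] at hx
    rcases hx with rfl | hx
    · right; left; rfl
    · obtain ⟨i, _, rfl⟩ := List.mem_map.mp hx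
      rw [hlam (i + 1) (by omega)]
      simp only [Nat.add_sub_cancel]
      have h1 := htau (i + 1); have h2 := htau i
      omega
  have hmemB : ∀ x ∈ wordB μ lam n, x = μ - 1 ∨ x = μ ∨ x = μ + 1 := by
    intro x hx
    rw [wordB, List.mem_cons] at hx
    rcases hx with rfl | hx
    · left; rfl
    · obtain ⟨i, _, rfl⟩ := List.mem_map.mp hx
      rw [hlam (i + 1) (by omega)]
      simp only [Nat.add_sub_cancel]
      have h1 := htau (i + 1); have h2 := htau i
      omega
  have hmemR : ∀ w : List ℤ, (∀ x ∈ w, x = μ - 1 ∨ x = μ ∨ x = μ + 1) →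
      ∀ x ∈ reflectZ μ w, x = μ - 1 ∨ x = μ ∨ x = μ + 1 := by
    intro w hw x hx
    obtain ⟨c, hc, rfl⟩ := List.mem_map.mp hx
    have := hw c hc
    show 2 * μ - c = μ - 1 ∨ 2 * μ - c = μ ∨ 2 * μ - c = μ + 1
    omega
  have hmem1 : ∀ x ∈ wordW1 μ lam n, x = μ - 1 ∨ x = μ ∨ x = μ + 1 := by
    intro x hx
    rw [wordW1] at hx
    simp only [List.mem_append] at hx
    rcases hx with ((hx | hx) | hx) | hx
    · exact hmemB x hx
    · exact hmemR _ hmemA x hx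
    · exact hmemR _ hmemB x hx
    · exact hmemA x hx
  have hmem2 : ∀ x ∈ wordW2 μ lam n, x = μ - 1 ∨ x = μ ∨ x = μ + 1 := by
    intro x hx
    rw [wordW2] at hx
    simp only [List.mem_append] at hx
    rcases hx with hx | hx
    · exact hmemR _ hmemA x hx
    · exact hmemA x hx
  -- lengths
  have hlenR : ∀ w : List ℤ, (reflectZ μ w).length = w.length := by
    intro w; simp [reflectZ]
  have hlenA : (wordA μ lam n).length = 2 ^ n := by
    simp only [wordA, List.length_cons, List.length_map, List.length_range]
    omega
  have hlenB : (wordB μ lam n).length = 2 ^ n := by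
    simp only [wordB, List.length_cons, List.length_map, List.length_range]
    omega
  have hlen1 : (wordW1 μ lam n).length = 4 * 2 ^ n := by
    simp only [wordW1, List.length_append, hlenR, hlenA, hlenB]
    omega
  have hlen2 : (wordW2 μ lam n).length = 2 * 2 ^ n := by
    simp only [wordW2, List.length_append, hlenR, hlenA]
    omega
  -- counts of μ
  have hmm : (2 : ℤ) * μ - μ = μ := by ring
  have hmp : (2 : ℤ) * μ - (μ - 1) = μ + 1 := by ring
  have hpm : (2 : ℤ) * μ - (μ + 1) = μ - 1 := by ring
  have hBA : (wordB μ lam n).count μ + 1 = (wordA μ lam n).count μ := by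
    simp only [wordA, wordB, List.count_cons, beq_iff_eq,
      if_pos rfl, if_neg (show ¬(μ - 1 = μ) from by omega)]
    simp
  have hc12 : (wordW1 μ lam n).count μ + 2 = 2 * (wordW2 μ lam n).count μ := by
    simp only [wordW1, wordW2, List.count_append, aux_count_reflect, hmm]
    omega
  have hc2pos : 1 ≤ (wordW2 μ lam n).count μ := by
    have hμA : μ ∈ wordA μ lam n := by rw [wordA]; exact List.mem_cons_self
    have h1 : 0 < (wordA μ lam n).count μ := List.count_pos_iff.mpr hμA
    simp only [wordW2, List.count_append]
    omega
  have hc1le : (wordW1 μ lam n).count μ ≤ 4 * 2 ^ n := by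
    rw [← hlen1]; exact List.count_le_length
  have hc2le : (wordW2 μ lam n).count μ ≤ 2 * 2 ^ n := by
    rw [← hlen2]; exact List.count_le_length
  -- symmetry between μ-1 and μ+1
  have hsym1 : (wordW1 μ lam n).count (μ - 1) = (wordW1 μ lam n).count (μ + 1) := by
    simp only [wordW1, List.count_append, aux_count_reflect, hmp, hpm]
    omega
  have hsym2 : (wordW2 μ lam n).count (μ - 1) = (wordW2 μ lam n).count (μ + 1) := by
    simp only [wordW2, List.count_append, aux_count_reflect, hmp, hpm]
    omega
  have hsum1 := aux_count3 μ (wordW1 μ lam n) hmem1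
  have hsum2 := aux_count3 μ (wordW2 μ lam n) hmem2
  rw [hlen1] at hsum1
  rw [hlen2] at hsum2
  -- part (i)
  have hpowR : (0 : ℝ) < (2 : ℝ) ^ n := by positivity
  have hpart1 : d2star μ (wordW1 μ lam n) < d2star μ (wordW2 μ lam n) := by
    rw [d2star, d2star, hlen1, hlen2]
    have hc12' : ((wordW1 μ lam n).count μ : ℝ) + 2 = 2 * ((wordW2 μ lam n).count μ : ℝ) := by
      exact_mod_cast congrArg (fun x : ℕ => (x : ℝ)) hc12
    push_cast
    rw [div_lt_div_iff₀ (by positivity) (by positivity)]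
    nlinarith [hpowR]
  refine ⟨hpart1, ?_⟩
  intro d hd
  obtain ⟨hdl, hdr⟩ := hd
  -- real bounds on d
  have hd2nonneg : (0:ℝ) ≤ d2star μ (wordW1 μ lam n) := by
    rw [d2star]; positivity
  have hd0 : 0 ≤ d := le_trans hd2nonneg hdl
  have hd1R : ((wordW1 μ lam n).count μ : ℝ) ≤ d * (4 * 2 ^ n) := by
    have := hdl
    rw [d2star, hlen1] at this
    rw [div_le_iff₀ (by positivity)] at this
    calc ((wordW1 μ lam n).count μ : ℝ) ≤ d * ((4 * 2 ^ n : ℕ) : ℝ) := this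
    _ = d * (4 * 2 ^ n) := by push_cast; ring
  have hd2R : d * (2 * 2 ^ n) ≤ ((wordW2 μ lam n).count μ : ℝ) := by
    have := hdr
    rw [d2star, hlen2] at this
    rw [le_div_iff₀ (by positivity)] at this
    calc d * (2 * 2 ^ n) = d * ((2 * 2 ^ n : ℕ) : ℝ) := by push_cast; ring
    _ ≤ _ := this
  have hdle1 : d ≤ 1 := by
    have h2 : ((wordW2 μ lam n).count μ : ℝ) ≤ 2 * 2 ^ n := by
      calc ((wordW2 μ lam n).count μ : ℝ) ≤ ((2 * 2 ^ n : ℕ) : ℝ) := by exact_mod_cast hc2le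
      _ = 2 * 2 ^ n := by push_cast; ring
    nlinarith [hd2R, hpowR]
  -- opaque abbreviations
  obtain ⟨c1, hc1_def⟩ : ∃ c, (wordW1 μ lam n).count μ = c := ⟨_, rfl⟩
  obtain ⟨c2, hc2_def⟩ : ∃ c, (wordW2 μ lam n).count μ = c := ⟨_, rfl⟩
  obtain ⟨l1, hl1_def⟩ : ∃ l, 4 * 2 ^ n = l := ⟨_, rfl⟩
  obtain ⟨l2, hl2_def⟩ : ∃ l, 2 * 2 ^ n = l := ⟨_, rfl⟩
  rw [hc1_def] at hc12 hc1le hd1R hsum1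
  rw [hc2_def] at hc12 hc2pos hc2le hd2R hsum2
  rw [hl1_def] at hlen1 hc1le hsum1
  rw [hl2_def] at hlen2 hc2le hsum2
  have hl1R : ((l1 : ℕ) : ℝ) = 4 * 2 ^ n := by rw [← hl1_def]; push_cast; ring
  have hl2R : ((l2 : ℕ) : ℝ) = 2 * 2 ^ n := by rw [← hl2_def]; push_cast; ring
  have hl2pos : 2 ≤ l2 := by omega
  have hl2l1 : l2 ≤ l1 := by omega
  have hc1R : ((c1 : ℕ) : ℝ) ≤ d * l1 := by rw [hl1R]; exact hd1R
  have hc2R : d * l2 ≤ ((c2 : ℕ) : ℝ) := by rw [hl2R]; exact hd2R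
  have hc2leR : ((c2 : ℕ) : ℝ) ≤ l2 := by exact_mod_cast hc2le
  have hl2l1R : ((l2 : ℕ) : ℝ) ≤ l1 := by exact_mod_cast hl2l1
  have hl1pos : (0:ℝ) < l1 := by exact_mod_cast (show 0 < l1 by omega)
  -- the greedy sequence
  obtain ⟨b, hb_def⟩ : ∃ b, gb (wordW1 μ lam n) (wordW2 μ lam n) l1 l2 c1 c2 d = b :=
    ⟨_, rfl⟩
  obtain ⟨P, hP_def⟩ : ∃ P, gP l1 l2 c1 c2 d = P := ⟨_, rfl⟩
  have hcases := gb_cases (wordW1 μ lam n) (wordW2 μ lam n) l1 l2 c1 c2 d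
  rw [hb_def, hP_def] at hcases
  have hP0 : P 0 = (0, 0) := by rw [← hP_def]; rfl
  -- per-block facts
  have hsym1' : 2 * (wordW1 μ lam n).count (μ - 1) + c1 = l1 := by omega
  have hsym1'' : 2 * (wordW1 μ lam n).count (μ + 1) + c1 = l1 := by omega
  have hsym2' : 2 * (wordW2 μ lam n).count (μ - 1) + c2 = l2 := by omega
  have hsym2'' : 2 * (wordW2 μ lam n).count (μ + 1) + c2 = l2 := by omega
  -- the main invariant
  have hInv : ∀ k,
      (Fcat b k).length = (P k).1 ∧
      (Fcat b k).count μ = (P k).2 ∧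
      2 * (Fcat b k).count (μ - 1) + (P k).2 = (P k).1 ∧
      2 * (Fcat b k).count (μ + 1) + (P k).2 = (P k).1 ∧
      |((P k).2 : ℝ) - d * ((P k).1 : ℝ)| ≤ (l1 : ℝ) := by
    intro k
    induction k with
    | zero =>
      rw [hP0]
      exact ⟨by simp [Fcat], by simp [Fcat], by simp [Fcat], by simp [Fcat],
        by simpa using le_of_lt hl1pos⟩
    | succ k ih =>
      obtain ⟨ihl, ihc, ihm, ihp, ihabs⟩ := ih
      rw [abs_le] at ihabs
      rcases hcases k with ⟨hbk, hcond, hPk⟩ | ⟨hbk, hcond, hPk⟩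
      · -- chose W2
        rw [Fcat_succ, hPk]
        have e1 : (b k).length = l2 := by rw [hbk, hlen2]
        have e2 : (b k).count μ = c2 := by rw [hbk, hc2_def]
        have e3 : (b k).count (μ - 1) = (wordW2 μ lam n).count (μ - 1) := by rw [hbk]
        have e4 : (b k).count (μ + 1) = (wordW2 μ lam n).count (μ + 1) := by rw [hbk]
        refine ⟨?_, ?_, ?_, ?_, ?_⟩
        · simp only [List.length_append, ihl, e1]
        · simp only [List.count_append, ihc, e2]
        · simp only [List.count_append, e3]; omega
        · simp only [List.count_append, e4]; omega
        · rw [abs_le]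
          push_cast
          constructor
          · nlinarith [ihabs.1, hcond, hc2R]
          · nlinarith [ihabs.2, hcond, hc2leR, hl2l1R,
              mul_nonneg hd0 (Nat.cast_nonneg (α := ℝ) l2)]
      · -- chose W1
        rw [Fcat_succ, hPk]
        have e1 : (b k).length = l1 := by rw [hbk, hlen1]
        have e2 : (b k).count μ = c1 := by rw [hbk, hc1_def]
        have e3 : (b k).count (μ - 1) = (wordW1 μ lam n).count (μ - 1) := by rw [hbk]
        have e4 : (b k).count (μ + 1) = (wordW1 μ lam n).count (μ + 1) := by rw [hbk]
        refine ⟨?_, ?_, ?_, ?_, ?_⟩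
        · simp only [List.length_append, ihl, e1]
        · simp only [List.count_append, ihc, e2]
        · simp only [List.count_append, e3]; omega
        · simp only [List.count_append, e4]; omega
        · rw [abs_le]
          push_cast
          constructor
          · nlinarith [ihabs.2, hcond, hc1R, Nat.cast_nonneg (α := ℝ) c1,
              mul_le_of_le_one_left (Nat.cast_nonneg (α := ℝ) l1) hdle1]
          · nlinarith [ihabs.2, hcond, hc1R]
  -- block lengths
  have hb1 : ∀ k, 1 ≤ (b k).length := by
    intro k
    rcases hcases k with ⟨hbk, -, -⟩ | ⟨hbk, -, -⟩
    · rw [hbk, hlen2]; omega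
    · rw [hbk, hlen1]; omega
  have hN2k : ∀ k, 2 * k ≤ (P k).1 := by
    intro k
    induction k with
    | zero => simp [hP0]
    | succ k ih =>
      rcases hcases k with ⟨-, -, hPk⟩ | ⟨-, -, hPk⟩ <;> rw [hPk] <;> dsimp only <;> omega
  have hstep : ∀ k, (P k).1 < (P (k + 1)).1 ∧ (P (k + 1)).1 ≤ (P k).1 + l1 := by
    intro k
    rcases hcases k with ⟨-, -, hPk⟩ | ⟨-, -, hPk⟩ <;> rw [hPk] <;> dsimp only <;> omega
  -- decomposition of prefixes
  have hKey : ∀ N : ℕ, 1 ≤ N → ∃ k, (P k).1 ≤ N ∧ N - (P k).1 ≤ l1 ∧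
      (Fcat b N).take N = Fcat b k ++ (b k).take (N - (P k).1) := by
    intro N hN
    have hex : ∃ k, N < (P k).1 := ⟨N, by have := hN2k N; omega⟩
    have hKspec := Nat.find_spec hex
    have hK1 : 1 ≤ Nat.find hex := by
      by_contra h
      have h0 : Nat.find hex = 0 := by omega
      rw [h0, hP0] at hKspec
      simp at hKspec
    obtain ⟨k, hk⟩ : ∃ k, Nat.find hex = k + 1 := ⟨Nat.find hex - 1, by omega⟩
    rw [hk] at hKspec
    have hk_le : (P k).1 ≤ N := by
      have := Nat.find_min hex (show k < Nat.find hex by omega)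
      omega
    have hk1N : k + 1 ≤ N := by
      rcases Nat.eq_zero_or_pos k with rfl | hkpos
      · exact hN
      · have := hN2k k; omega
    refine ⟨k, hk_le, ?_, ?_⟩
    · have := (hstep k).2; omega
    · have h1 : (Fcat b N).take N = (Fcat b (k + 1)).take N := by
        apply take_Fcat' b hk1N
        rw [(hInv (k + 1)).1]
        omega
      rw [h1, Fcat_succ]
      have h2 : N = (Fcat b k).length + (N - (P k).1) := by
        rw [(hInv k).1]; omega
      conv_lhs => rw [h2]
      rw [List.take_append]
      rw [List.take_of_length_le (by omega), Nat.add_sub_cancel_left]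
  -- density estimate for the letter μ
  have hEstμ : ∀ N : ℕ, 1 ≤ N →
      |((((Fcat b N).take N).count μ : ℕ) : ℝ) - d * N| ≤ 2 * (l1 : ℝ) := by
    intro N hN
    obtain ⟨k, hk1, hk2, hdec⟩ := hKey N hN
    obtain ⟨hFl, hFc, -, -, habs⟩ := hInv k
    rw [hdec, List.count_append, hFc]
    have hmle : ((b k).take (N - (P k).1)).count μ ≤ N - (P k).1 :=
      (List.count_le_length).trans (by rw [List.length_take]; omega)
    rw [abs_le] at habs ⊢
    obtain ⟨ha1, ha2⟩ := habs
    have hPleN : ((P k).1 : ℝ) ≤ N := by exact_mod_cast hk1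
    have hdiffR : ((N : ℝ) - (P k).1) ≤ l1 := by
      rw [← Nat.cast_sub hk1]; exact_mod_cast hk2
    have hmleR : ((((b k).take (N - (P k).1)).count μ : ℕ) : ℝ) ≤ (N : ℝ) - (P k).1 := by
      rw [← Nat.cast_sub hk1]; exact_mod_cast hmle
    have hm0 : (0:ℝ) ≤ ((((b k).take (N - (P k).1)).count μ : ℕ) : ℝ) := Nat.cast_nonneg _
    have hp1 : 0 ≤ d * ((N:ℝ) - (P k).1) := mul_nonneg hd0 (by linarith)
    have hp2 : d * ((N:ℝ) - (P k).1) ≤ (N:ℝ) - (P k).1 :=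
      mul_le_of_le_one_left (by linarith) hdle1
    push_cast
    constructor <;> linarith [ha1, ha2, hp1, hp2, hmleR, hm0, hdiffR]
  -- density estimate for the letters μ-1 and μ+1
  have hEstSide : ∀ j : ℤ, (∀ k, 2 * (Fcat b k).count j + (P k).2 = (P k).1) →
      ∀ N : ℕ, 1 ≤ N →
      |((((Fcat b N).take N).count j : ℕ) : ℝ) - (1 - d) / 2 * N| ≤ 2 * (l1 : ℝ) := by
    intro j hsymm N hN
    obtain ⟨k, hk1, hk2, hdec⟩ := hKey N hN
    obtain ⟨hFl, hFc, -, -, habs⟩ := hInv k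
    have hFj := hsymm k
    have hFjR : 2 * (((Fcat b k).count j : ℕ) : ℝ) + ((P k).2 : ℝ) = ((P k).1 : ℝ) := by
      exact_mod_cast congrArg (fun t : ℕ => (t : ℝ)) hFj
    rw [hdec, List.count_append]
    have hmle : ((b k).take (N - (P k).1)).count j ≤ N - (P k).1 :=
      (List.count_le_length).trans (by rw [List.length_take]; omega)
    rw [abs_le] at habs ⊢
    obtain ⟨ha1, ha2⟩ := habs
    have hPleN : ((P k).1 : ℝ) ≤ N := by exact_mod_cast hk1
    have hdiffR : ((N : ℝ) - (P k).1) ≤ l1 := by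
      rw [← Nat.cast_sub hk1]; exact_mod_cast hk2
    have hmleR : ((((b k).take (N - (P k).1)).count j : ℕ) : ℝ) ≤ (N : ℝ) - (P k).1 := by
      rw [← Nat.cast_sub hk1]; exact_mod_cast hmle
    have hm0 : (0:ℝ) ≤ ((((b k).take (N - (P k).1)).count j : ℕ) : ℝ) := Nat.cast_nonneg _
    have hp1 : 0 ≤ d * ((N:ℝ) - (P k).1) := mul_nonneg hd0 (by linarith)
    have hp2 : d * ((N:ℝ) - (P k).1) ≤ (N:ℝ) - (P k).1 :=
      mul_le_of_le_one_left (by linarith) hdle1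
    push_cast
    push_cast at hFjR
    constructor <;> linarith [ha1, ha2, hp1, hp2, hmleR, hm0, hdiffR, hFjR,
      le_of_lt hl1pos]
  have hEstm := hEstSide (μ - 1) (fun k => (hInv k).2.2.1)
  have hEstp := hEstSide (μ + 1) (fun k => (hInv k).2.2.2.1)
  -- translation from Finset counts to List counts
  have hrw : ∀ j : ℤ,
      (fun N : ℕ => (((Finset.range N).filter (fun i => concatOf b i = j)).card : ℝ) / N)
        = fun N : ℕ => ((((Fcat b N).take N).count j : ℕ) : ℝ) / N := by
    intro j
    funext N
    rw [card_filter_eq_count b hb1]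
  refine ⟨b, ?_, ?_, ?_⟩
  · intro k
    rcases hcases k with ⟨hbk, -, -⟩ | ⟨hbk, -, -⟩
    · exact Or.inr hbk
    · exact Or.inl hbk
  · intro j hj
    simp only [Set.mem_insert_iff, Set.mem_singleton_iff] at hj
    rcases hj with rfl | hj2 | rfl
    · refine ⟨(1 - d) / 2, ?_⟩
      rw [hrw]
      exact aux_tendsto (fun N => ((((Fcat b N).take N).count (μ - 1) : ℕ) : ℝ))
        ((1 - d) / 2) (2 * l1) hEstm
    · refine ⟨d, ?_⟩
      rw [hj2, hrw]
      exact aux_tendsto (fun N => ((((Fcat b N).take N).count μ : ℕ) : ℝ))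
        d (2 * l1) hEstμ
    · refine ⟨(1 - d) / 2, ?_⟩
      rw [hrw]
      exact aux_tendsto (fun N => ((((Fcat b N).take N).count (μ + 1) : ℕ) : ℝ))
        ((1 - d) / 2) (2 * l1) hEstp
  · rw [hrw]
    exact aux_tendsto (fun N => ((((Fcat b N).take N).count μ : ℕ) : ℝ))
      d (2 * l1) hEstμ
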